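/- arXiv:1010.1203 — 4 statements merged into one kernel-verified Lean document; each statement's English description precedes it below -/
import Mathlib

section
/- Let p be a prime with p > 2, let r ≥ 1 and q = p^r with q > 3, let n ≥ 1, and let 0 ≤ i ≤ n. Let k be an algebraically closed field of characteristic p and let φ : 𝔽_q → k be a ring homomorphism. Then the first group cohomology H^1(SL_{n+1}(𝔽_q), ⋀^i k^{n+1}) of SL_{n+1}(𝔽_q) with coefficients in the i-th exterior power of the natural module k^{n+1} (action induced by φ) is zero. -/
open Matrix ExteriorAlgebra

/-- The algebra map of exterior algebras induced by a linear map preserves the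
`i`-th exterior power. -/
theorem map_mem_exteriorPower {k V W : Type*} [CommRing k] [AddCommGroup V] [Module k V]
    [AddCommGroup W] [Module k W] (f : V →ₗ[k] W) (i : ℕ) {x : ExteriorAlgebra k V}
    (hx : x ∈ ⋀[k]^i V) : ExteriorAlgebra.map f x ∈ ⋀[k]^i W := by
  have h2 : Submodule.map (ExteriorAlgebra.map f).toLinearMap
      (LinearMap.range (ι k (M := V))) ≤ LinearMap.range (ι k (M := W)) := by
    rw [ExteriorAlgebra.ι_range_map_map]
    rintro y ⟨v, -, rfl⟩
    exact LinearMap.mem_range_self _ v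
  have h3 : ∀ j : ℕ, (Submodule.map (ExteriorAlgebra.map f).toLinearMap
      (LinearMap.range (ι k (M := V)))) ^ j ≤ (LinearMap.range (ι k (M := W))) ^ j := by
    intro j
    induction j with
    | zero => simp
    | succ m ih =>
      rw [pow_succ, pow_succ]
      exact mul_le_mul' ih h2
  have h1 : Submodule.map (ExteriorAlgebra.map f).toLinearMap (⋀[k]^i V)
      = (Submodule.map (ExteriorAlgebra.map f).toLinearMap
          (LinearMap.range (ι k (M := V)))) ^ i := Submodule.map_pow _ _ i
  exact h3 i (h1 ▸ Submodule.mem_map_of_mem hx)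

/-- The representation of `G` on the `i`-th exterior power of `V` induced by a
representation of `G` on `V` (functorial action on the exterior power). -/
noncomputable def Representation.extPower {k G V : Type*} [CommRing k] [Group G]
    [AddCommGroup V] [Module k V] (ρ : Representation k G V) (i : ℕ) :
    Representation k G (⋀[k]^i V) where
  toFun g := (ExteriorAlgebra.map (ρ g)).toLinearMap.restrict
    (fun _x hx => map_mem_exteriorPower (ρ g) i hx)
  map_one' := by
    ext x
    simp only [LinearMap.restrict_coe_apply, _root_.map_one, Module.End.one_eq_id,
      ExteriorAlgebra.map_id, AlgHom.coe_id, id_eq, Module.End.one_apply]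
    rfl
  map_mul' g h := by
    ext x
    simp only [LinearMap.restrict_coe_apply, _root_.map_mul, Module.End.mul_eq_comp,
      ← ExteriorAlgebra.map_comp_map, AlgHom.coe_comp, Function.comp_apply,
      Module.End.mul_apply, LinearMap.coe_comp, AlgHom.comp_toLinearMap,
      LinearMap.restrict_coe_apply]
    rfl

/-- The natural representation of `SL_{n+1}(𝔽_q)` on `k^{n+1}`, acting by applying `φ`
entrywise and then by matrix–vector multiplication. -/
noncomputable def natRepSL (p r n : ℕ) [Fact p.Prime] (k : Type) [Field k]
    (φ : GaloisField p r →+* k) :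
    Representation k (Matrix.SpecialLinearGroup (Fin (n + 1)) (GaloisField p r))
      (Fin (n + 1) → k) where
  toFun M := ((M : Matrix (Fin (n + 1)) (Fin (n + 1)) (GaloisField p r)).map φ).mulVecLin
  map_one' := by
    simp only [Matrix.SpecialLinearGroup.coe_one, Matrix.map_one φ (map_zero φ) (_root_.map_one φ),
      Matrix.mulVecLin_one]
    rfl
  map_mul' A B := by
    simp only [Matrix.SpecialLinearGroup.coe_mul, Matrix.map_mul, Matrix.mulVecLin_mul,
      Module.End.mul_eq_comp]

open Finset groupCohomology

namespace SLWork

set_option linter.unusedSectionVars false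

variable {F k : Type} [Field F] [Field k] [Fintype F] [DecidableEq F] {m : ℕ}

/-- The group of "diagonal data": tuples of units with product 1. -/
def T0 (F : Type) [Field F] (m : ℕ) : Subgroup (Fin m → Fˣ) where
  carrier := {u | ∏ c, u c = 1}
  mul_mem' := by
    intro a b ha hb
    simp only [Set.mem_setOf_eq, Pi.mul_apply, Finset.prod_mul_distrib] at *
    rw [ha, hb, mul_one]
  one_mem' := by simp
  inv_mem' := by
    intro a ha
    simp only [Set.mem_setOf_eq, Pi.inv_apply, Finset.prod_inv_distrib] at *
    rw [ha, inv_one]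

lemma T0_prod (u : T0 F m) : ∏ c, (u : Fin m → Fˣ) c = 1 := u.2

lemma T0_prod_val (u : T0 F m) : ∏ c, ((u : Fin m → Fˣ) c : F) = 1 := by
  have h : ((∏ c, (u : Fin m → Fˣ) c : Fˣ) : F) = ∏ c, ((u : Fin m → Fˣ) c : F) :=
    map_prod (Units.coeHom F) _ _
  rw [← h, T0_prod u, Units.val_one]

/-- The diagonal matrix in `SL` attached to an element of `T0`. -/
noncomputable def dgHom : T0 F m →* Matrix.SpecialLinearGroup (Fin m) F where
  toFun u := ⟨diagonal (fun c => ((u : Fin m → Fˣ) c : F)), by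
    rw [det_diagonal, T0_prod_val u]⟩
  map_one' := by
    apply Subtype.ext
    simp [Matrix.SpecialLinearGroup.coe_one]
  map_mul' u v := by
    apply Subtype.ext
    show (diagonal _ : Matrix _ _ F) = _
    show _ = (diagonal _ : Matrix _ _ F) * diagonal _
    rw [diagonal_mul_diagonal]
    congr 1

lemma dgHom_coe (u : T0 F m) :
    (dgHom u : Matrix (Fin m) (Fin m) F) = diagonal (fun c => ((u : Fin m → Fˣ) c : F)) := rfl

/-- Transvections as elements of `SL`. -/
def tv (a b : Fin m) (hab : a ≠ b) (s : F) : Matrix.SpecialLinearGroup (Fin m) F :=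
  ⟨transvection a b s, det_transvection_of_ne a b hab s⟩

lemma tv_mul (a b : Fin m) (hab : a ≠ b) (s s' : F) :
    tv a b hab s * tv a b hab s' = tv a b hab (s + s') :=
  Subtype.ext (transvection_mul_transvection_same a b hab s s')

lemma tv_zero (a b : Fin m) (hab : a ≠ b) : tv a b hab (0 : F) = 1 := by
  apply Subtype.ext
  show transvection a b (0 : F) = _
  simp [transvection, Matrix.SpecialLinearGroup.coe_one]

lemma tv_inv (a b : Fin m) (hab : a ≠ b) (s : F) :
    (tv a b hab s)⁻¹ = tv a b hab (-s) := by
  apply inv_eq_of_mul_eq_one_right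
  rw [tv_mul, add_neg_cancel, tv_zero]

lemma dg_conj_tv (u : T0 F m) (a b : Fin m) (hab : a ≠ b) (s : F) :
    dgHom u * tv a b hab s * (dgHom u)⁻¹
      = tv a b hab (((u : Fin m → Fˣ) a : F) * s * ((((u : Fin m → Fˣ) b)⁻¹ : Fˣ) : F)) := by
  rw [← map_inv]
  apply Subtype.ext
  rw [Matrix.SpecialLinearGroup.coe_mul, Matrix.SpecialLinearGroup.coe_mul, dgHom_coe, dgHom_coe]
  ext c c'
  rw [mul_diagonal, diagonal_mul]
  show (↑((u : Fin m → Fˣ) c) : F) * (transvection a b s) c c' * ((((u : Fin m → Fˣ) c')⁻¹ : Fˣ) : F)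
      = (transvection a b _) c c'
  simp only [transvection, Matrix.add_apply, Matrix.one_apply, Matrix.single, of_apply]
  by_cases hcc : c = c'
  · subst hcc
    have hfalse : ¬ (a = c ∧ b = c) := by
      rintro ⟨rfl, rfl⟩; exact hab rfl
    simp [hfalse]
  · simp only [if_neg hcc, zero_add]
    by_cases hx : a = c ∧ b = c'
    · obtain ⟨rfl, rfl⟩ := hx
      simp only [and_self, if_pos trivial, eq_self_iff_true, true_and, and_true, if_true]
      try ring
    · simp [hx]



/-- The subgroup of `T0` of tuples with equal `a` and `b` components. -/
def Kab (a b : Fin m) : Subgroup (T0 F m) where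
  carrier := {u | (u : Fin m → Fˣ) a = (u : Fin m → Fˣ) b}
  mul_mem' := by
    intro x y hx hy
    simp only [Set.mem_setOf_eq, Subgroup.coe_mul, Pi.mul_apply] at *
    rw [hx, hy]
  one_mem' := by simp
  inv_mem' := by
    intro x hx
    simp only [Set.mem_setOf_eq] at *
    show (x : Fin m → Fˣ)⁻¹ a = (x : Fin m → Fˣ)⁻¹ b
    simp [hx]

noncomputable instance : Fintype (T0 F m) := Fintype.ofFinite _
noncomputable instance (a b : Fin m) : Fintype (Kab (F := F) (m := m) a b) := Fintype.ofFinite _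

/-- A product of three `mulSingle`s. -/
def mk3 (c₁ c₂ c₃ : Fin m) (x₁ x₂ x₃ : Fˣ) : Fin m → Fˣ :=
  Pi.mulSingle c₁ x₁ * Pi.mulSingle c₂ x₂ * Pi.mulSingle c₃ x₃

lemma prod_mk3 (c₁ c₂ c₃ : Fin m) (x₁ x₂ x₃ : Fˣ) (s : Finset (Fin m)) :
    ∏ c ∈ s, mk3 c₁ c₂ c₃ x₁ x₂ x₃ c
      = (if c₁ ∈ s then x₁ else 1) * (if c₂ ∈ s then x₂ else 1) * (if c₃ ∈ s then x₃ else 1) := by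
  simp only [mk3, Pi.mul_apply, Finset.prod_mul_distrib, Finset.prod_pi_mulSingle']

lemma eval_mk3 {c₁ c₂ c₃ : Fin m} (x₁ x₂ x₃ : Fˣ) {d : Fin m} :
    mk3 c₁ c₂ c₃ x₁ x₂ x₃ d
      = (if d = c₁ then x₁ else 1) * (if d = c₂ then x₂ else 1) * (if d = c₃ then x₃ else 1) := by
  simp only [mk3, Pi.mul_apply, Pi.mulSingle_apply]

/-- Existence of an element of `Kab` on which a given "injective monomial character"
is nontrivial. -/
lemma exists_prod_ne_one {i : ℕ} (hi1 : 1 ≤ i) (him : i < m) (hm : 3 ≤ m)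
    (hq : 3 ≤ Nat.card Fˣ) (a b : Fin m) (hab : a ≠ b)
    (j : Fin i → Fin m) (hj : Function.Injective j) :
    ∃ u : Kab (F := F) (m := m) a b,
      ∏ l, ((u : T0 F m) : Fin m → Fˣ) (j l) ≠ 1 := by
  obtain ⟨g, hg⟩ := IsCyclic.exists_generator (α := Fˣ)
  have hN : orderOf g = Nat.card Fˣ := orderOf_eq_card_of_forall_mem_zpowers hg
  set N := orderOf g with hNdef
  have hN3 : 3 ≤ N := by rw [hN]; exact hq
  have hpow : ∀ w : ℕ, 0 < w → w < N → g ^ w ≠ 1 := by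
    intro w hw1 hw2 h
    have := Nat.le_of_dvd hw1 (orderOf_dvd_of_pow_eq_one h)
    omega
  have hgN : g ^ N = 1 := pow_orderOf_eq_one g
  set S : Finset (Fin m) := Finset.image j Finset.univ with hS
  have hcardS : S.card = i := by
    rw [hS, Finset.card_image_of_injective _ hj, Finset.card_univ, Fintype.card_fin]
  have hprodS : ∀ u : Fin m → Fˣ, ∏ l, u (j l) = ∏ c ∈ S, u c := by
    intro u
    rw [hS, Finset.prod_image (fun x _ y _ h => hj h)]
  have hab2 : ({a, b} : Finset (Fin m)).card = 2 := by
    rw [Finset.card_insert_of_notMem (by simpa using hab), Finset.card_singleton]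
  -- helper to package an element
  have mkel : ∀ (u : Fin m → Fˣ), (∏ c, u c = 1) → (u a = u b) →
      ∃ uu : Kab (F := F) (m := m) a b, ((uu : T0 F m) : Fin m → Fˣ) = u := by
    intro u h1 h2
    exact ⟨⟨⟨u, h1⟩, h2⟩, rfl⟩
  -- shape A : for y ∉ {a, b}, the tuple (g at a, g at b, g^(N-2) at y)
  have shapeA : ∀ y : Fin m, y ≠ a → y ≠ b →
      ∃ uu : Kab (F := F) (m := m) a b,
        ((uu : T0 F m) : Fin m → Fˣ) = mk3 a b y g g (g ^ (N - 2)) := by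
    intro y hya hyb
    refine mkel _ ?_ ?_
    · rw [prod_mk3, if_pos (Finset.mem_univ _), if_pos (Finset.mem_univ _),
        if_pos (Finset.mem_univ _)]
      have e : g * g * g ^ (N - 2) = g ^ (1 + 1 + (N - 2)) := by
        rw [pow_add, pow_add, pow_one]
      have e2 : 1 + 1 + (N - 2) = N := by omega
      rw [e, e2, hgN]
    · rw [eval_mk3, eval_mk3, if_pos rfl, if_neg (Ne.symm hab), if_neg hab,
        if_neg (fun h => hya h.symm), if_pos rfl, if_neg (fun h => hyb h.symm)]
      simp only [one_mul, mul_one]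
  by_cases ha : a ∈ S <;> by_cases hb : b ∈ S
  · -- a, b ∈ S : take y ∉ S
    have : Sᶜ.Nonempty := by
      rw [← Finset.card_pos, Finset.card_compl, Fintype.card_fin]
      omega
    obtain ⟨y, hy⟩ := this
    rw [Finset.mem_compl] at hy
    have hya : y ≠ a := fun h => hy (h ▸ ha)
    have hyb : y ≠ b := fun h => hy (h ▸ hb)
    obtain ⟨uu, huu⟩ := shapeA y hya hyb
    refine ⟨uu, ?_⟩
    rw [huu, hprodS, prod_mk3, if_pos ha, if_pos hb, if_neg hy, mul_one]
    have e : g * g = g ^ 2 := by rw [pow_two]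
    rw [e]
    exact hpow 2 (by omega) (by omega)
  · -- a ∈ S, b ∉ S : any y ∉ {a, b}
    have : ({a, b}ᶜ : Finset (Fin m)).Nonempty := by
      rw [← Finset.card_pos, Finset.card_compl, Fintype.card_fin, hab2]
      omega
    obtain ⟨y, hy⟩ := this
    rw [Finset.mem_compl, Finset.mem_insert, Finset.mem_singleton] at hy
    push_neg at hy
    obtain ⟨uu, huu⟩ := shapeA y hy.1 hy.2
    refine ⟨uu, ?_⟩
    rw [huu, hprodS, prod_mk3, if_pos ha, if_neg hb, mul_one]
    by_cases hyS : y ∈ S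
    · rw [if_pos hyS]
      have e := (pow_add g 1 (N - 2)).symm
      rw [pow_one] at e
      have e2 : 1 + (N - 2) = N - 1 := by omega
      rw [e2] at e
      rw [e]
      exact hpow (N - 1) (by omega) (by omega)
    · rw [if_neg hyS, mul_one]
      exact hpow 1 (by omega) (by omega) ∘ (by rw [pow_one]; exact id)
  · -- b ∈ S, a ∉ S
    have : ({a, b}ᶜ : Finset (Fin m)).Nonempty := by
      rw [← Finset.card_pos, Finset.card_compl, Fintype.card_fin, hab2]
      omega
    obtain ⟨y, hy⟩ := this
    rw [Finset.mem_compl, Finset.mem_insert, Finset.mem_singleton] at hy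
    push_neg at hy
    obtain ⟨uu, huu⟩ := shapeA y hy.1 hy.2
    refine ⟨uu, ?_⟩
    rw [huu, hprodS, prod_mk3, if_neg ha, if_pos hb, one_mul]
    by_cases hyS : y ∈ S
    · rw [if_pos hyS]
      have e := (pow_add g 1 (N - 2)).symm
      rw [pow_one] at e
      have e2 : 1 + (N - 2) = N - 1 := by omega
      rw [e2] at e
      rw [e]
      exact hpow (N - 1) (by omega) (by omega)
    · rw [if_neg hyS, mul_one]
      exact hpow 1 (by omega) (by omega) ∘ (by rw [pow_one]; exact id)
  · -- a ∉ S, b ∉ S : take x₀ ∈ S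
    have : S.Nonempty := by
      rw [← Finset.card_pos]
      omega
    obtain ⟨x₀, hx₀⟩ := this
    have hxa : x₀ ≠ a := fun h => ha (h ▸ hx₀)
    have hxb : x₀ ≠ b := fun h => hb (h ▸ hx₀)
    obtain ⟨uu, huu⟩ := mkel (mk3 x₀ a b (g ^ 2) (g ^ (N - 1)) (g ^ (N - 1)))
      (by
        rw [prod_mk3, if_pos (Finset.mem_univ _), if_pos (Finset.mem_univ _),
          if_pos (Finset.mem_univ _), ← pow_add, ← pow_add]
        have e2 : 2 + (N - 1) + (N - 1) = N * 2 := by omega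
        rw [e2, pow_mul, hgN, one_pow])
      (by
        rw [eval_mk3, eval_mk3, if_neg (fun h : a = x₀ => hxa h.symm), if_pos rfl,
          if_neg hab, if_neg (fun h : b = x₀ => hxb h.symm), if_neg (Ne.symm hab), if_pos rfl]
        simp only [one_mul, mul_one])
    refine ⟨uu, ?_⟩
    rw [huu, hprodS, prod_mk3, if_pos hx₀, if_neg ha, if_neg hb, mul_one, mul_one]
    exact hpow 2 (by omega) (by omega)


/-- The natural representation (generic version of `natRepSL`). -/
noncomputable def natRep (F k : Type) [Field F] [Field k] (m : ℕ) (φ : F →+* k) :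
    Representation k (Matrix.SpecialLinearGroup (Fin m) F) (Fin m → k) where
  toFun M := ((M : Matrix (Fin m) (Fin m) F).map φ).mulVecLin
  map_one' := by
    simp only [Matrix.SpecialLinearGroup.coe_one, Matrix.map_one φ (map_zero φ) (_root_.map_one φ),
      Matrix.mulVecLin_one]
    rfl
  map_mul' A B := by
    simp only [Matrix.SpecialLinearGroup.coe_mul, Matrix.map_mul, Matrix.mulVecLin_mul,
      Module.End.mul_eq_comp]

variable (φ : F →+* k)

lemma natRep_dg_single (u : T0 F m) (c : Fin m) :
    natRep F k m φ (dgHom u) (Pi.single c (1 : k) : Fin m → k)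
      = φ (((u : Fin m → Fˣ) c : F)) • (Pi.single c (1 : k) : Fin m → k) := by
  show Matrix.mulVecLin ((dgHom u : Matrix (Fin m) (Fin m) F).map φ) _ = _
  rw [dgHom_coe, Matrix.diagonal_map (map_zero φ), Matrix.mulVecLin_apply,
    Matrix.diagonal_mulVec_single]
  ext c'
  by_cases h : c' = c
  · subst h; simp
  · simp [Pi.single_apply, h]

lemma char_sum_eq_zero {H : Type} [Group H] [Fintype H] {χ : H → k}
    (hmul : ∀ a b, χ (a * b) = χ a * χ b) {h₀ : H} (h : χ h₀ ≠ 1) :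
    ∑ a : H, χ a = 0 := by
  have key : χ h₀ * ∑ a : H, χ a = ∑ a : H, χ a := by
    rw [Finset.mul_sum]
    exact Fintype.sum_bijective (fun a => h₀ * a) (Group.mulLeft_bijective h₀) _ _
      (fun a => (hmul h₀ a).symm)
  have key2 : (χ h₀ - 1) * ∑ a : H, χ a = 0 := by
    rw [sub_mul, one_mul, key, sub_self]
  rcases mul_eq_zero.1 key2 with h1 | h2
  · exact absurd (by rwa [sub_eq_zero] at h1) h
  · exact h2

/-- Key operator identity: the sum over `Kab a b` of the exterior-power actions
vanishes on `⋀^i` when `1 ≤ i < m`. -/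
lemma sum_map_dg_eq_zero {i : ℕ} (hi1 : 1 ≤ i) (him : i < m) (hm : 3 ≤ m)
    (hq : 3 ≤ Nat.card Fˣ) (a b : Fin m) (hab : a ≠ b)
    {x : ExteriorAlgebra k (Fin m → k)} (hx : x ∈ ⋀[k]^i (Fin m → k)) :
    ∑ u : Kab (F := F) (m := m) a b,
      ExteriorAlgebra.map (natRep F k m φ (dgHom (u : T0 F m))) x = 0 := by
  classical
  set L : ExteriorAlgebra k (Fin m → k) →ₗ[k] ExteriorAlgebra k (Fin m → k) :=
    ∑ u : Kab (F := F) (m := m) a b,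
      (ExteriorAlgebra.map (natRep F k m φ (dgHom (u : T0 F m)))).toLinearMap with hL
  have hLapp : ∀ y, L y = ∑ u : Kab (F := F) (m := m) a b,
      ExteriorAlgebra.map (natRep F k m φ (dgHom (u : T0 F m))) y := by
    intro y
    rw [hL, LinearMap.sum_apply]
    rfl
  suffices hker : (⋀[k]^i (Fin m → k)) ≤ LinearMap.ker L by
    have := hker hx
    rw [LinearMap.mem_ker] at this
    rw [← hLapp]
    exact this
  rw [← ExteriorAlgebra.ιMulti_span_fixedDegree, Submodule.span_le]
  rintro _ ⟨v, rfl⟩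
  simp only [SetLike.mem_coe, LinearMap.mem_ker]
  -- multilinear expansion of `ιMulti v` in terms of standard monomials
  have hv : ιMulti k i v = ∑ j : Fin i → Fin m,
      (∏ l, v l (j l)) • ιMulti k i (fun l => Pi.single (j l) (1 : k)) := by
    have e1 : ∀ (x : Fin m → k), x = ∑ c, x c • (Pi.single c (1 : k) : Fin m → k) := by
      intro x
      conv_lhs => rw [pi_eq_sum_univ x]
      refine Finset.sum_congr rfl fun c _ => ?_
      congr 1
      funext j'
      by_cases h : c = j'
      · subst h; simp
      · rw [if_neg h, Pi.single_apply, if_neg (fun hh => h hh.symm)]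
    have expand : (fun l => ∑ c : Fin m, v l c • (Pi.single c (1 : k) : Fin m → k)) = v := by
      funext l
      exact (e1 (v l)).symm
    calc ιMulti k i v
        = (ιMulti k i).toMultilinearMap
            (fun l => ∑ c : Fin m, v l c • (Pi.single c (1 : k) : Fin m → k)) := by
          rw [expand]; rfl
      _ = ∑ j : Fin i → Fin m, (ιMulti k i).toMultilinearMap
            (fun l => v l (j l) • (Pi.single (j l) (1 : k) : Fin m → k)) :=
          MultilinearMap.map_sum _ _
      _ = ∑ j : Fin i → Fin m,
            (∏ l, v l (j l)) • ιMulti k i (fun l => Pi.single (j l) (1 : k)) := by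
          refine Finset.sum_congr rfl fun j _ => ?_
          exact MultilinearMap.map_smul_univ _ _ _
  rw [hv, map_sum]
  refine Finset.sum_eq_zero fun j _ => ?_
  rw [LinearMap.map_smul]
  suffices h0 : L (ιMulti k i fun l => Pi.single (j l) (1 : k)) = 0 by rw [h0, smul_zero]
  by_cases hj : Function.Injective j
  · -- injective monomial : use the character sum
    have hmon : ∀ u : Kab (F := F) (m := m) a b,
        ExteriorAlgebra.map (natRep F k m φ (dgHom (u : T0 F m)))
            (ιMulti k i fun l => Pi.single (j l) (1 : k))
          = (∏ l, φ ((((u : T0 F m) : Fin m → Fˣ) (j l) : F)))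
              • ιMulti k i fun l => Pi.single (j l) (1 : k) := by
      intro u
      rw [ExteriorAlgebra.map_apply_ιMulti]
      have e : (natRep F k m φ (dgHom (u : T0 F m))) ∘ (fun l => (Pi.single (j l) (1 : k) : Fin m → k))
          = fun l => φ ((((u : T0 F m) : Fin m → Fˣ) (j l) : F)) • (Pi.single (j l) (1 : k) : Fin m → k) := by
        funext l
        exact natRep_dg_single φ _ _
      rw [e]
      exact MultilinearMap.map_smul_univ (ιMulti k i).toMultilinearMap _ _
    rw [hLapp]
    have : ∑ u : Kab (F := F) (m := m) a b,
        ExteriorAlgebra.map (natRep F k m φ (dgHom (u : T0 F m)))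
          (ιMulti k i fun l => Pi.single (j l) (1 : k))
        = (∑ u : Kab (F := F) (m := m) a b,
            ∏ l, φ ((((u : T0 F m) : Fin m → Fˣ) (j l) : F)))
            • ιMulti k i fun l => Pi.single (j l) (1 : k) := by
      rw [Finset.sum_smul]
      exact Finset.sum_congr rfl fun u _ => hmon u
    rw [this]
    -- the character sum vanishes
    have hchar : (∑ u : Kab (F := F) (m := m) a b,
        ∏ l, φ ((((u : T0 F m) : Fin m → Fˣ) (j l) : F))) = 0 := by
      obtain ⟨u₀, hu₀⟩ := exists_prod_ne_one hi1 him hm hq a b hab j hj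
      refine char_sum_eq_zero ?_ (h₀ := u₀) ?_
      · intro u u'
        rw [← Finset.prod_mul_distrib]
        refine Finset.prod_congr rfl fun l _ => ?_
        rw [← _root_.map_mul]
        rfl
      · intro hcon
        apply hu₀
        have hval : ((∏ l, ((u₀ : T0 F m) : Fin m → Fˣ) (j l) : Fˣ) : F)
            = ∏ l, ((((u₀ : T0 F m) : Fin m → Fˣ) (j l) : F)) := map_prod (Units.coeHom F) _ _
        have h2 : φ ((∏ l, ((u₀ : T0 F m) : Fin m → Fˣ) (j l) : Fˣ) : F) = φ 1 := by
          rw [hval, map_prod, _root_.map_one]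
          exact hcon
        exact Units.ext (by rw [Units.val_one]; exact φ.injective h2)
    rw [hchar, zero_smul]
  · -- non-injective : the monomial is zero
    have hni : ¬ Function.Injective (fun l => (Pi.single (j l) (1 : k) : Fin m → k)) := by
      rw [Function.not_injective_iff] at hj ⊢
      obtain ⟨l1, l2, he, hne⟩ := hj
      exact ⟨l1, l2, by rw [he], hne⟩
    rw [AlternatingMap.map_eq_zero_of_not_injective _ _ hni, map_zero]

section Cocycle

variable {G : Type} [Group G] {A : Rep k G}

lemma cocycle_one (f : G → A) (hf : ∀ g h, f (g * h) = A.ρ g (f h) + f g) : f 1 = 0 := by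
  have h := hf 1 1
  rw [mul_one, _root_.map_one, Module.End.one_apply] at h
  exact add_eq_left.mp h.symm

lemma cocycle_inv (f : G → A) (hf : ∀ g h, f (g * h) = A.ρ g (f h) + f g) (g : G) :
    f g⁻¹ = - (A.ρ g⁻¹ (f g)) := by
  have h := hf g⁻¹ g
  rw [inv_mul_cancel, cocycle_one f hf] at h
  exact eq_neg_of_add_eq_zero_right h.symm

lemma cocycle_conj (f : G → A) (hf : ∀ g h, f (g * h) = A.ρ g (f h) + f g)
    {t : G} (ht : f t = 0) (g : G) : f (t * g * t⁻¹) = A.ρ t (f g) := by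
  have ht' : f t⁻¹ = 0 := by rw [cocycle_inv f hf t, ht, map_zero, neg_zero]
  have h1 : f (t * (g * t⁻¹)) = A.ρ t (f (g * t⁻¹)) + f t := hf t (g * t⁻¹)
  rw [hf g t⁻¹, ht', map_zero, zero_add, ht, add_zero, ← mul_assoc] at h1
  exact h1

lemma cocycle_zero_mul (f : G → A) (hf : ∀ g h, f (g * h) = A.ρ g (f h) + f g)
    {g h : G} (hg : f g = 0) (hh : f h = 0) : f (g * h) = 0 := by
  rw [hf, hh, map_zero, hg, add_zero]

lemma cocycle_avg {H : Type} [Group H] [Fintype H]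
    (f : G → A) (hf : ∀ g h, f (g * h) = A.ρ g (f h) + f g)
    (θ : H →* G) (hc : (Fintype.card H : k) ≠ 0) :
    ∃ w : A, ∀ h : H, f (θ h) = A.ρ (θ h) w - w := by
  set c : k := (Fintype.card H : k) with hcdef
  set Sm : A := ∑ h : H, f (θ h) with hSm
  refine ⟨-(c⁻¹ • Sm), fun h => ?_⟩
  have key : Sm = A.ρ (θ h) Sm + c • f (θ h) := by
    have e1 : ∑ h' : H, f (θ (h * h')) = Sm :=
      Fintype.sum_equiv (Equiv.mulLeft h) _ _ (fun h' => rfl)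
    calc Sm = ∑ h' : H, f (θ (h * h')) := e1.symm
      _ = ∑ h' : H, (A.ρ (θ h) (f (θ h')) + f (θ h)) := by
          refine Finset.sum_congr rfl fun h' _ => ?_
          rw [_root_.map_mul θ]
          exact hf (θ h) (θ h')
      _ = A.ρ (θ h) Sm + c • f (θ h) := by
          rw [Finset.sum_add_distrib, ← _root_.map_sum, Finset.sum_const, Finset.card_univ,
            hcdef, Nat.cast_smul_eq_nsmul]
  have e2 : c • f (θ h) = Sm - A.ρ (θ h) Sm := by
    rw [eq_sub_iff_add_eq, add_comm (c • f (θ h)) _]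
    exact key.symm
  have e3 : f (θ h) = c⁻¹ • (Sm - A.ρ (θ h) Sm) := by
    rw [← e2, smul_smul, inv_mul_cancel₀ hc, one_smul]
  rw [e3, map_neg, _root_.map_smul, smul_sub]
  abel

lemma cocycle_sub (f : G → A) (hf : ∀ g h, f (g * h) = A.ρ g (f h) + f g) (w : A) (g h : G) :
    f (g * h) - (A.ρ (g * h) w - w)
      = A.ρ g (f h - (A.ρ h w - w)) + (f g - (A.ρ g w - w)) := by
  rw [hf, map_sub, map_sub, _root_.map_mul, Module.End.mul_apply]
  abel

end Cocycle

/-- An element of `T0` with distinct values at `a` and `b`. -/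
lemma exists_ratio (hq : 3 ≤ Nat.card Fˣ) (a b : Fin m) (hab : a ≠ b) :
    ∃ u : T0 F m, (((u : Fin m → Fˣ) a : F) * ((((u : Fin m → Fˣ) b)⁻¹ : Fˣ) : F)) ≠ 1 := by
  obtain ⟨g, hg⟩ := IsCyclic.exists_generator (α := Fˣ)
  have hN : orderOf g = Nat.card Fˣ := orderOf_eq_card_of_forall_mem_zpowers hg
  have hg2 : g ^ 2 ≠ 1 := by
    intro h
    have := Nat.le_of_dvd (by omega) (orderOf_dvd_of_pow_eq_one h)
    omega
  set u : Fin m → Fˣ := Pi.mulSingle a g * Pi.mulSingle b g⁻¹ with hu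
  have hprod : ∏ c, u c = 1 := by
    rw [hu]
    simp only [Pi.mul_apply, Finset.prod_mul_distrib, Finset.prod_pi_mulSingle',
      if_pos (Finset.mem_univ _)]
    exact mul_inv_cancel g
  have hua : u a = g := by
    rw [hu]
    simp only [Pi.mul_apply, Pi.mulSingle_apply, if_pos rfl, if_neg hab]
    exact mul_one g
  have hub : u b = g⁻¹ := by
    rw [hu]
    simp only [Pi.mul_apply, Pi.mulSingle_apply, if_pos rfl, if_neg (Ne.symm hab)]
    exact one_mul g⁻¹
  refine ⟨⟨u, hprod⟩, ?_⟩
  show ((u a : F) * ((u b)⁻¹ : Fˣ)) ≠ 1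
  rw [hua, hub, inv_inv, ← Units.val_mul, ← pow_two]
  intro h
  exact hg2 (Units.ext (by rw [h]; rfl))

/-- If a cocycle vanishes on all diagonal elements and all transvections, it vanishes. -/
lemma cocycle_vanishes {A : Rep k (Matrix.SpecialLinearGroup (Fin m) F)}
    (f : Matrix.SpecialLinearGroup (Fin m) F → A)
    (hf : ∀ g h, f (g * h) = A.ρ g (f h) + f g)
    (hdiag : ∀ u : T0 F m, f (dgHom u) = 0)
    (htv : ∀ (a b : Fin m) (hab : a ≠ b) (s : F), f (tv a b hab s) = 0) :
    ∀ g, f g = 0 := by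
  have hlist : ∀ Lst : List (Matrix.TransvectionStruct (Fin m) F),
      ∃ gL : Matrix.SpecialLinearGroup (Fin m) F,
        (gL : Matrix (Fin m) (Fin m) F) = (Lst.map Matrix.TransvectionStruct.toMatrix).prod
          ∧ f gL = 0 := by
    intro Lst
    induction Lst with
    | nil =>
        exact ⟨1, by simp [Matrix.SpecialLinearGroup.coe_one], cocycle_one f hf⟩
    | cons t L ih =>
        obtain ⟨gL, hgL, hfgL⟩ := ih
        refine ⟨tv t.i t.j t.hij t.c * gL, ?_, cocycle_zero_mul f hf (htv _ _ _ _) hfgL⟩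
        rw [Matrix.SpecialLinearGroup.coe_mul, hgL, List.map_cons, List.prod_cons]
        rfl
  intro g
  obtain ⟨L, L', D, hD⟩ :=
    Matrix.Pivot.exists_list_transvec_mul_diagonal_mul_list_transvec
      (g : Matrix (Fin m) (Fin m) F)
  have hdetg : Matrix.det (g : Matrix (Fin m) (Fin m) F) = 1 := g.2
  have hdet : ∏ c, D c = 1 := by
    rw [hD, Matrix.det_mul, Matrix.det_mul, Matrix.TransvectionStruct.det_toMatrix_prod,
      Matrix.TransvectionStruct.det_toMatrix_prod, Matrix.det_diagonal, one_mul, mul_one] at hdetg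
    exact hdetg
  have hDunit : ∀ c, D c ≠ 0 := by
    intro c hc
    rw [Finset.prod_eq_zero (Finset.mem_univ c) hc] at hdet
    exact zero_ne_one hdet
  set u : Fin m → Fˣ := fun c => Units.mk0 (D c) (hDunit c) with hu
  have hu1 : ∏ c, u c = 1 := by
    apply Units.ext
    have : ((∏ c, u c : Fˣ) : F) = ∏ c, (u c : F) := map_prod (Units.coeHom F) _ _
    rw [this]
    simpa [hu] using hdet
  obtain ⟨gL, hgL, h0L⟩ := hlist L
  obtain ⟨gL', hgL', h0L'⟩ := hlist L'
  have hgeq : g = gL * dgHom ⟨u, hu1⟩ * gL' := by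
    apply Subtype.ext
    rw [Matrix.SpecialLinearGroup.coe_mul, Matrix.SpecialLinearGroup.coe_mul, hgL, hgL',
      dgHom_coe, hD]
    rfl
  rw [hgeq]
  exact cocycle_zero_mul f hf (cocycle_zero_mul f hf h0L (hdiag _)) h0L'

/-- Cardinality of subgroups of tuples of units is invertible in characteristic `p`. -/
lemma card_cast_ne_zero {p : ℕ} [Fact p.Prime] [CharP k p] (hpF : p ∣ Fintype.card F)
    {c : ℕ} (hc : c ∣ Nat.card (Fin m → Fˣ)) : (c : k) ≠ 0 := by
  intro h
  rw [CharP.cast_eq_zero_iff k p] at h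
  have h2 : p ∣ Nat.card (Fin m → Fˣ) := dvd_trans h hc
  rw [Nat.card_eq_fintype_card, Fintype.card_pi] at h2
  rw [Finset.prod_const, Finset.card_univ, Fintype.card_fin] at h2
  have h3 := (Fact.out : p.Prime).dvd_of_dvd_pow h2
  rw [Fintype.card_units] at h3
  have h5 : p ∣ 1 := by
    have h6 := Nat.dvd_sub hpF h3
    have h7 : Fintype.card F - (Fintype.card F - 1) = 1 := by
      have := Fintype.card_pos (α := F)
      omega
    rwa [h7] at h6
  exact Nat.Prime.one_lt (Fact.out : p.Prime) |>.ne' (Nat.dvd_one.1 h5)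

/-- On the 0-th exterior power, any induced map acts trivially. -/
lemma map_exteriorPower_zero {V : Type} [AddCommGroup V] [Module k V]
    (f : V →ₗ[k] V) {x : ExteriorAlgebra k V} (hx : x ∈ ⋀[k]^0 V) :
    ExteriorAlgebra.map f x = x := by
  rw [exteriorPower, pow_zero] at hx
  obtain ⟨y, hy⟩ := Submodule.mem_one.1 hx
  rw [← hy]
  exact (ExteriorAlgebra.map f).commutes y

lemma rho_coe {G : Type} [Group G] {V : Type} [AddCommGroup V] [Module k V]
    (ρ : Representation k G V) (i : ℕ) (g : G) (x : ⋀[k]^i V) :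
    ((ρ.extPower i g x : ⋀[k]^i V) : ExteriorAlgebra k V)
      = ExteriorAlgebra.map (ρ g) (x : ExteriorAlgebra k V) := rfl

/-- If an element of the `i`-th exterior power is invariant under the action
of all of `Kab a b`, it vanishes. -/
lemma sum_rho_eq_zero {i : ℕ} (hi1 : 1 ≤ i) (him : i < m) (hm : 3 ≤ m)
    (hq : 3 ≤ Nat.card Fˣ) {p : ℕ} [Fact p.Prime] [CharP k p] (hpF : p ∣ Fintype.card F)
    (a b : Fin m) (hab : a ≠ b) (X : (⋀[k]^i (Fin m → k) : Submodule k _))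
    (hX : ∀ u : Kab (F := F) (m := m) a b,
      (natRep F k m φ).extPower i (dgHom (u : T0 F m)) X = X) :
    X = 0 := by
  have hsum : (Fintype.card (Kab (F := F) (m := m) a b) : k) • X
      = ∑ u : Kab (F := F) (m := m) a b, (natRep F k m φ).extPower i (dgHom (u : T0 F m)) X := by
    rw [Finset.sum_congr rfl fun u _ => hX u, Finset.sum_const, Finset.card_univ,
      Nat.cast_smul_eq_nsmul]
  have hz : (∑ u : Kab (F := F) (m := m) a b,
      (natRep F k m φ).extPower i (dgHom (u : T0 F m)) X) = 0 := by
    apply Subtype.ext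
    rw [AddSubmonoidClass.coe_finset_sum]
    have e3 : ∀ u : Kab (F := F) (m := m) a b,
        (((natRep F k m φ).extPower i (dgHom (u : T0 F m)) X) : ExteriorAlgebra k (Fin m → k))
          = ExteriorAlgebra.map (natRep F k m φ (dgHom (u : T0 F m)))
              (X : ExteriorAlgebra k (Fin m → k)) := fun u => rfl
    rw [Finset.sum_congr rfl fun u _ => e3 u,
      sum_map_dg_eq_zero φ hi1 him hm hq a b hab X.2]
    rfl
  have hcK : (Fintype.card (Kab (F := F) (m := m) a b) : k) ≠ 0 :=
    card_cast_ne_zero hpF (by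
      rw [← Nat.card_eq_fintype_card]
      exact dvd_trans (Subgroup.card_subgroup_dvd_card _) (Subgroup.card_subgroup_dvd_card _))
  rw [hz] at hsum
  rcases smul_eq_zero.1 hsum with h | h
  · exact absurd h hcK
  · exact h

/-- The action of the diagonal element with all entries `-1` on `⋀¹` is `-1`. -/
lemma extPower_one_neg (u : T0 F m) (hu : ∀ c, (((u : Fin m → Fˣ) c : F)) = -1)
    (X : (⋀[k]^1 (Fin m → k) : Submodule k _)) :
    (natRep F k m φ).extPower 1 (dgHom u) X = -X := by
  apply Subtype.ext
  have hx : (X : ExteriorAlgebra k (Fin m → k))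
      ∈ (LinearMap.range (ι k (M := Fin m → k))) ^ 1 := X.2
  rw [pow_one] at hx
  obtain ⟨v, hv⟩ := hx
  have hcoe : (((natRep F k m φ).extPower 1 (dgHom u) X) : ExteriorAlgebra k (Fin m → k))
      = ExteriorAlgebra.map (natRep F k m φ (dgHom u))
          (X : ExteriorAlgebra k (Fin m → k)) := rfl
  rw [hcoe, ← hv, ExteriorAlgebra.map_apply_ι]
  have e0 : natRep F k m φ (dgHom u) v = -v := by
    show Matrix.mulVecLin ((dgHom u : Matrix (Fin m) (Fin m) F).map φ) v = -v
    rw [dgHom_coe, Matrix.diagonal_map (map_zero φ)]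
    have e : (fun c => φ (((u : Fin m → Fˣ) c : F))) = fun _ : Fin m => (-1 : k) := by
      funext c
      rw [hu c, map_neg, _root_.map_one]
    rw [e]
    have e2 : Matrix.diagonal (fun _ : Fin m => (-1 : k)) = -1 := by
      ext c c'
      rw [Matrix.diagonal_apply, Matrix.neg_apply, Matrix.one_apply]
      split_ifs
      · rfl
      · exact neg_zero.symm
    rw [e2, Matrix.mulVecLin_apply, Matrix.neg_mulVec, Matrix.one_mulVec]
  rw [e0, map_neg, hv]
  rfl

end SLWork

open SLWork

/-- **Vanishing of `H¹` for `SL_{n+1}(𝔽_q)` with coefficients in exterior powers of the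
natural module (type `Aₙ`).**  Let `p > 2` be a prime, `q = p ^ r > 3` with `r ≥ 1`, let
`0 ≤ i ≤ n`, and let `k` be an algebraically closed field of characteristic `p`.  Then
`H¹(SL_{n+1}(𝔽_q), ⋀^i k^{n+1}) = 0`, where the action is induced by a ring homomorphism
`φ : 𝔽_q → k`. -/
theorem H1_SL_exteriorPower_natural_eq_zero (p r n i : ℕ) [Fact p.Prime]
    (hp : 2 < p) (hr : 1 ≤ r) (hq : 3 < p ^ r) (hi : i ≤ n)
    (k : Type) [Field k] [IsAlgClosed k] [CharP k p] (φ : GaloisField p r →+* k) :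
    Subsingleton (groupCohomology (Rep.of ((natRepSL p r n k φ).extPower i)) 1) := by
  classical
  haveI hFinF : Finite (GaloisField p r) := Nat.finite_of_card_ne_zero (by
    rw [GaloisField.card p r (by omega)]
    omega)
  haveI : Fintype (GaloisField p r) := Fintype.ofFinite _
  set F : Type := GaloisField p r with hF
  set G := Matrix.SpecialLinearGroup (Fin (n + 1)) F with hG
  set A : Rep k G := Rep.of ((natRepSL p r n k φ).extPower i) with hA
  have hnat : natRepSL p r n k φ = SLWork.natRep F k (n + 1) φ := rfl
  have hφp : p ∣ Fintype.card F := by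
    rw [← Nat.card_eq_fintype_card, hF, GaloisField.card p r (by omega)]
    exact dvd_pow_self p (by omega)
  have hquc : 3 ≤ Nat.card Fˣ := by
    rw [Nat.card_eq_fintype_card, Fintype.card_units, ← Nat.card_eq_fintype_card, hF,
      GaloisField.card p r (by omega)]
    omega
  suffices hco : ∀ f : groupCohomology.cocycles₁ A, ⇑f ∈ groupCohomology.coboundaries₁ A by
    have hs : Function.Surjective (groupCohomology.H1π A) :=
      (ModuleCat.epi_iff_surjective _).1 inferInstance
    refine ⟨fun x y => ?_⟩
    obtain ⟨x, rfl⟩ := hs x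
    obtain ⟨y, rfl⟩ := hs y
    rw [(groupCohomology.H1π_eq_zero_iff x).2 (hco x), (groupCohomology.H1π_eq_zero_iff y).2 (hco y)]
  intro f
  suffices hco' : ∃ x : A, ∀ g, A.ρ g x - x = f g by
    obtain ⟨x, hx⟩ := hco'
    exact ⟨x, funext fun g => by rw [groupCohomology.d₀₁_hom_apply]; exact hx g⟩
  set F0 : G → A := ⇑f with hF0
  have hf : ∀ g h : G, F0 (g * h) = A.ρ g (F0 h) + F0 g :=
    (groupCohomology.mem_cocycles₁_iff (F0)).1 f.2
  -- cardinality facts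
  have hcT0 : (Fintype.card (T0 F (n + 1)) : k) ≠ 0 :=
    card_cast_ne_zero hφp (by
      rw [← Nat.card_eq_fintype_card]
      exact Subgroup.card_subgroup_dvd_card _)
  obtain ⟨w, hw⟩ := cocycle_avg F0 hf (dgHom (F := F) (m := n + 1)) hcT0
  by_cases hi0 : i = 0
  · -- trivial coefficients
    subst hi0
    have htriv : ∀ (g : G) (x : A), A.ρ g x = x := by
      intro g x
      exact Subtype.ext (map_exteriorPower_zero _ x.2)
    have hdiag : ∀ u : T0 F (n + 1), F0 (dgHom u) = 0 := fun u => by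
      rw [hw u, htriv]; exact sub_self w
    have hhom : ∀ g h : G, F0 (g * h) = F0 h + F0 g := fun g h => by rw [hf, htriv]
    have htv : ∀ (a b : Fin (n + 1)) (hab : a ≠ b) (s : F), F0 (tv a b hab s) = 0 := by
      intro a b hab s
      obtain ⟨u, hu⟩ := exists_ratio (F := F) hquc a b hab
      set t : F := ((((u : Fin (n+1) → Fˣ) a : F)
        * ((((u : Fin (n+1) → Fˣ) b)⁻¹ : Fˣ) : F)) - 1)⁻¹ * s with ht
      have hconj := cocycle_conj F0 hf (hdiag u) (tv a b hab t)
      rw [htriv, dg_conj_tv] at hconj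
      have hinv : (((((u : Fin (n+1) → Fˣ) a : F))
            * ((((u : Fin (n+1) → Fˣ) b)⁻¹ : Fˣ) : F)) - 1)
          * (((((u : Fin (n+1) → Fˣ) a : F))
            * ((((u : Fin (n+1) → Fˣ) b)⁻¹ : Fˣ) : F)) - 1)⁻¹ = 1 :=
        mul_inv_cancel₀ (sub_ne_zero.2 hu)
      have e : (((u : Fin (n+1) → Fˣ) a : F)) * t
          * ((((u : Fin (n+1) → Fˣ) b)⁻¹ : Fˣ) : F) = s + t := by
        rw [ht]
        linear_combination s * hinv
      rw [e, ← tv_mul a b hab s t, hhom] at hconj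
      exact add_eq_left.mp hconj
    have hvan := cocycle_vanishes F0 hf hdiag htv
    exact ⟨0, fun g => by rw [map_zero, sub_zero, hvan g]⟩
  · have hi1 : 1 ≤ i := Nat.one_le_iff_ne_zero.2 hi0
    -- the modified cocycle
    set F1 : G → A := fun g => F0 g - (A.ρ g w - w) with hF1
    have hf1 : ∀ g h : G, F1 (g * h) = A.ρ g (F1 h) + F1 g := fun g h =>
      cocycle_sub F0 hf w g h
    have hdiag1 : ∀ u : T0 F (n + 1), F1 (dgHom u) = 0 := fun u => by
      rw [hF1]; simp only; rw [hw u]; exact sub_self _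
    by_cases hn : 2 ≤ n
    · -- main case
      have htv1 : ∀ (a b : Fin (n + 1)) (hab : a ≠ b) (s : F), F1 (tv a b hab s) = 0 := by
        intro a b hab s
        set X : A := F1 (tv a b hab s) with hX
        have hinvar : ∀ u : Kab (F := F) (m := n + 1) a b,
            A.ρ (dgHom (u : T0 F (n + 1))) X = X := by
          intro u
          have h1 := cocycle_conj F1 hf1 (hdiag1 (u : T0 F (n + 1))) (tv a b hab s)
          rw [dg_conj_tv] at h1
          have hab' : ((u : T0 F (n + 1)) : Fin (n + 1) → Fˣ) a
              = ((u : T0 F (n + 1)) : Fin (n + 1) → Fˣ) b := u.2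
          have e : (((u : T0 F (n + 1)) : Fin (n + 1) → Fˣ) a : F) * s
              * ((((u : T0 F (n + 1)) : Fin (n + 1) → Fˣ) b)⁻¹ : Fˣ) = s := by
            rw [hab', mul_comm ((((u : T0 F (n + 1)) : Fin (n + 1) → Fˣ) b : F)) s,
              mul_assoc, Units.mul_inv, mul_one]
          rw [e] at h1
          exact h1.symm
        have hX : ∀ u : Kab (F := F) (m := n + 1) a b,
            (natRep F k (n + 1) φ).extPower i (dgHom (u : T0 F (n + 1))) X = X := by
          intro u
          exact hinvar u
        exact sum_rho_eq_zero φ hi1 (by omega) (by omega) hquc hφp a b hab X hX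
      have hvan := cocycle_vanishes F1 hf1 hdiag1 htv1
      refine ⟨w, fun g => ?_⟩
      have := hvan g
      rw [hF1] at this
      simp only at this
      exact (sub_eq_zero.1 this).symm
    · -- n = 1, i = 1 : center argument
      have hn1 : n = 1 := by omega
      have hi' : i = 1 := by omega
      subst hn1
      subst hi'
      -- the central element -1
      have hprodz : ∏ _c : Fin 2, (-1 : Fˣ) = 1 := by
        rw [Finset.prod_const, Finset.card_univ, Fintype.card_fin, neg_one_sq]
      set z : G := dgHom ⟨fun _ => (-1 : Fˣ), hprodz⟩ with hz
      have hzcoe : (z : Matrix (Fin 2) (Fin 2) F) = -1 := by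
        rw [hz, dgHom_coe]
        have : (fun c : Fin 2 => (((-1 : Fˣ) : F))) = fun _ : Fin 2 => (-1 : F) := by
          funext c
          rw [Units.val_neg, Units.val_one]
        rw [this]
        ext c c'
        rw [Matrix.diagonal_apply, Matrix.neg_apply, Matrix.one_apply]
        split_ifs
        · rfl
        · exact neg_zero.symm
      have hcent : ∀ g : G, z * g = g * z := by
        intro g
        apply Subtype.ext
        rw [Matrix.SpecialLinearGroup.coe_mul, Matrix.SpecialLinearGroup.coe_mul, hzcoe,
          neg_one_mul, mul_neg_one]
      have hρz : ∀ x : A, A.ρ z x = -x := fun x =>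
        extPower_one_neg φ ⟨fun _ => (-1 : Fˣ), hprodz⟩
          (fun c => by rw [Units.val_neg, Units.val_one]) x
      -- the two expressions for F0 (z * g)
      have key : ∀ g : G, A.ρ g (F0 z) - F0 z = -((2 : k) • F0 g) := by
        intro g
        have h1 : F0 (z * g) = A.ρ z (F0 g) + F0 z := hf z g
        have h2 : F0 (g * z) = A.ρ g (F0 z) + F0 g := hf g z
        rw [hcent g, h2, hρz] at h1
        have h3 : A.ρ g (F0 z) = -F0 g + F0 z - F0 g := eq_sub_of_add_eq h1
        rw [h3, two_smul]
        abel
      have h2k : (-(2 : k)) ≠ 0 := by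
        intro h
        have h2 : (2 : k) = 0 := neg_eq_zero.1 h
        have h3 : ((2 : ℕ) : k) = 0 := by exact_mod_cast h2
        rw [CharP.cast_eq_zero_iff k p] at h3
        have := Nat.le_of_dvd (by omega) h3
        omega
      refine ⟨(-(2 : k))⁻¹ • F0 z, fun g => ?_⟩
      rw [_root_.map_smul]
      erw [← smul_sub]
      rw [key g, show -((2:k) • F0 g) = (-(2:k)) • F0 g by
        exact (neg_smul (2 : k) (F0 g)).symm, smul_smul, inv_mul_cancel₀ h2k, one_smul]
end

section
/- Let p be an odd prime and let n ≥ 1 and j be integers with 1 ≤ j ≤ n. Write n+1 = Σ_{i=0}^t b_i p^i in base p with 0 ≤ b_i < p and b_t ≠ 0, and write n+1−j = Σ_{i≥0} a_i p^i in base p with 0 ≤ a_i < p. Then the following are equivalent: (i) there exists i ≥ 0 with a_i > 0 and j = 2(p − a_i)p^i; (ii) there exists i with 0 ≤ i < t, b_i ≠ 0, and j = 2 b_i p^i. -/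
lemma getD_digits_eq (p : ℕ) (hp : 1 < p) (i m : ℕ) :
    (Nat.digits p m).getD i 0 = m / p ^ i % p := by
  induction i generalizing m with
  | zero =>
    rcases Nat.eq_zero_or_pos m with h | h
    · simp [h]
    · rw [Nat.digits_def' hp h]; simp
  | succ i ih =>
    rcases Nat.eq_zero_or_pos m with h | h
    · simp [h]
    · rw [Nat.digits_def' hp h]
      simp only [List.getD_cons_succ]
      rw [ih, Nat.div_div_eq_div_mul, ← pow_succ']

lemma len_digits_iff (p : ℕ) (hp : 1 < p) (i m : ℕ) (hm : m ≠ 0) :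
    i + 1 < (Nat.digits p m).length ↔ p ^ (i + 1) ≤ m := by
  rw [Nat.digits_len p m hp hm, Nat.add_lt_add_iff_right,
    ← Nat.le_log_iff_pow_le hp hm]
  omega

/-- **Combinatorial equivalence underlying the reformulation of the Kleshchev–Sheth theorem
(type `Cₙ`).**  Let `p` be an odd prime and `1 ≤ j ≤ n`.  Writing `n + 1` in base `p` with
digits `b i` (top digit `b t ≠ 0`, so `t + 1` is the number of digits), and `n + 1 - j` in
base `p` with digits `a i`, the following are equivalent:
(i)  there is `i` with `a i > 0` and `j = 2 * (p - a i) * p ^ i`;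
(ii) there is `i < t` with `b i ≠ 0` and `j = 2 * (b i) * p ^ i`. -/
theorem digit_criterion_equiv (p n j : ℕ) (hp : p.Prime) (hodd : Odd p)
    (hj1 : 1 ≤ j) (hjn : j ≤ n) :
    (∃ i : ℕ, 0 < (Nat.digits p (n + 1 - j)).getD i 0 ∧
        j = 2 * (p - (Nat.digits p (n + 1 - j)).getD i 0) * p ^ i) ↔
    (∃ i : ℕ, i + 1 < (Nat.digits p (n + 1)).length ∧
        (Nat.digits p (n + 1)).getD i 0 ≠ 0 ∧
        j = 2 * (Nat.digits p (n + 1)).getD i 0 * p ^ i) := by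
  have hp1 : 1 < p := hp.one_lt
  have hpp : 0 < p := by omega
  constructor
  · rintro ⟨i, ha, hj⟩
    rw [getD_digits_eq p hp1] at ha hj
    set M := n + 1 - j with hMdef
    set q := p ^ i with hqdef
    have hq : 0 < q := pow_pos hpp i
    set a := M / q % p with hadef
    have halt : a < p := Nat.mod_lt _ hpp
    set c := p - a with hcdef
    have hpc : p = a + c := by omega
    have hclt : c < p := by omega
    set G := M / q / p with hGdef
    have h2 : p * G + a = M / q := Nat.div_add_mod (M / q) p
    have hM1 : M = q * (p * G + a) + M % q := by
      rw [h2, Nat.div_add_mod]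
    have hj' : j = 2 * c * q := hj
    have key : q * (p * G + a) + 2 * c * q = q * (p * (G + 1) + c) := by
      rw [hpc]; ring
    have hN : n + 1 = q * (p * (G + 1) + c) + M % q := by
      calc n + 1 = M + j := by omega
        _ = q * (p * G + a) + M % q + 2 * c * q := by rw [← hM1, hj']
        _ = q * (p * G + a) + 2 * c * q + M % q := by ring
        _ = q * (p * (G + 1) + c) + M % q := by rw [key]
    have hmod : M % q < q := Nat.mod_lt _ hq
    have hdiv : (n + 1) / q = p * (G + 1) + c := by
      rw [hN, Nat.mul_add_div hq, Nat.div_eq_of_lt hmod, add_zero]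
    have hdig : (n + 1) / q % p = c := by
      rw [hdiv, Nat.mul_add_mod, Nat.mod_eq_of_lt hclt]
    refine ⟨i, ?_, ?_, ?_⟩
    · rw [len_digits_iff p hp1 i (n + 1) (by omega)]
      have h3 : p ≤ p * (G + 1) + c := by nlinarith
      have h4 : q * p ≤ q * (p * (G + 1) + c) := Nat.mul_le_mul_left q h3
      calc p ^ (i + 1) = p * q := by rw [hqdef, ← pow_succ']
        _ = q * p := mul_comm _ _
        _ ≤ q * (p * (G + 1) + c) := h4
        _ ≤ n + 1 := hN ▸ Nat.le_add_right _ _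
    · rw [getD_digits_eq p hp1, ← hqdef, hdig]; omega
    · rw [getD_digits_eq p hp1, ← hqdef, hdig, hj']
  · rintro ⟨i, hlen, hb0, hj⟩
    rw [getD_digits_eq p hp1] at hb0 hj
    set q := p ^ i with hqdef
    have hq : 0 < q := pow_pos hpp i
    set b := (n + 1) / q % p with hbdef
    have hblt : b < p := Nat.mod_lt _ hpp
    have hb : 0 < b := by omega
    set a := p - b with hadef
    have hpab : p = a + b := by omega
    have halt : a < p := by omega
    have hap : 0 < a := by omega
    set H := (n + 1) / q / p with hHdef
    have hpq : q * p ≤ n + 1 := by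
      rw [len_digits_iff p hp1 i (n + 1) (by omega)] at hlen
      calc q * p = p * q := mul_comm _ _
        _ = p ^ (i + 1) := by rw [hqdef, ← pow_succ']
        _ ≤ n + 1 := hlen
    have hH1 : 1 ≤ H := by
      rw [hHdef, Nat.div_div_eq_div_mul,
        Nat.le_div_iff_mul_le (Nat.mul_pos hq hpp), one_mul]
      exact hpq
    set H' := H - 1 with hH'def
    have hHH : H = H' + 1 := by omega
    have h2 : p * H + b = (n + 1) / q := Nat.div_add_mod ((n + 1) / q) p
    have hN1 : n + 1 = q * (p * H + b) + (n + 1) % q := by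
      rw [h2, Nat.div_add_mod]
    have hj' : j = 2 * b * q := hj
    have key : q * (p * H' + a) + 2 * b * q = q * (p * H + b) := by
      rw [hHH, hpab]; ring
    set M := n + 1 - j with hMdef
    have hsum : q * (p * H' + a) + (n + 1) % q + j = n + 1 := by
      calc q * (p * H' + a) + (n + 1) % q + j
          = q * (p * H' + a) + 2 * b * q + (n + 1) % q := by rw [hj']; ring
        _ = q * (p * H + b) + (n + 1) % q := by rw [key]
        _ = n + 1 := hN1.symm
    have hMeq : M = q * (p * H' + a) + (n + 1) % q := by omega
    have hmod : (n + 1) % q < q := Nat.mod_lt _ hq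
    have hdiv : M / q = p * H' + a := by
      rw [hMeq, Nat.mul_add_div hq, Nat.div_eq_of_lt hmod, add_zero]
    have hdig : M / q % p = a := by
      rw [hdiv, Nat.mul_add_mod, Nat.mod_eq_of_lt halt]
    refine ⟨i, ?_, ?_⟩
    · rw [getD_digits_eq p hp1, ← hqdef, hdig]; exact hap
    · rw [getD_digits_eq p hp1, ← hqdef, hdig]
      have hab : p - a = b := by omega
      rw [hab]
      exact hj'
end

section
/- Let n ≥ 2. In ℚ^n with standard basis e_1, …, e_n, set α_i = e_i − e_{i+1} for 1 ≤ i ≤ n−1 and α_n = e_n; set ω_j = e_1 + ⋯ + e_j for 1 ≤ j ≤ n−1 and ω_n = (e_1 + ⋯ + e_n)/2. Call μ ∈ ℚ^n dominant integral if μ_1 ≥ μ_2 ≥ ⋯ ≥ μ_n ≥ 0 and either every μ_i ∈ ℤ or every μ_i ∈ ℤ + 1/2. Then: (i) for 1 ≤ j ≤ n−1 and μ dominant integral, ω_j − μ is a nonnegative integer combination of α_1, …, α_n if and only if μ = 0 or μ = ω_i for some 1 ≤ i ≤ j; (ii) for μ dominant integral, ω_n − μ is a nonnegative integer combination of α_1,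 …, α_n if and only if μ = ω_n. -/
/-- The simple roots of type `Bₙ` in the standard realization in `ℚⁿ` (`0`-indexed):
`α i = e i - e (i+1)` for `i < n - 1`, and `α (n-1) = e (n-1)` (the short simple root). -/
def simpleRootB (n : ℕ) (i : Fin n) : Fin n → ℚ := fun t =>
  if t = i then 1 else if (t : ℕ) = (i : ℕ) + 1 then -1 else 0

/-- The fundamental weights `ω j = e 0 + ⋯ + e (j-1)` of type `Bₙ` for `1 ≤ j ≤ n - 1`,
in the standard realization in `ℚⁿ` (`0`-indexed); `fundWeightB n 0 = 0`. -/
def fundWeightB (n : ℕ) (j : ℕ) : Fin n → ℚ := fun t => if (t : ℕ) < j then 1 else 0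

/-- The last fundamental weight `ω n = (e 0 + ⋯ + e (n-1)) / 2` of type `Bₙ`. -/
def lastFundWeightB (n : ℕ) : Fin n → ℚ := fun _ => 1 / 2

/-- `μ` is a dominant integral weight for type `Bₙ`:
`μ 0 ≥ μ 1 ≥ ⋯ ≥ μ (n-1) ≥ 0` and the coordinates are either all integers or all
half-integers. -/
def IsDominantB (n : ℕ) (μ : Fin n → ℚ) : Prop :=
  (∀ s t : Fin n, s ≤ t → μ t ≤ μ s) ∧ (∀ t, 0 ≤ μ t) ∧
    ((∀ t, ∃ m : ℤ, μ t = m) ∨ (∀ t, ∃ m : ℤ, μ t = m + 1 / 2))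

open Finset in
def bS (n : ℕ) (v : Fin n → ℚ) (k : ℕ) : ℚ :=
  ∑ s : Fin n, if (s : ℕ) ≤ k then v s else 0

lemma bS_sub (n : ℕ) (v w : Fin n → ℚ) (k : ℕ) :
    bS n (v - w) k = bS n v k - bS n w k := by
  unfold bS
  rw [← Finset.sum_sub_distrib]
  refine Finset.sum_congr rfl fun s _ => ?_
  by_cases h : (s : ℕ) ≤ k <;> simp [h]

lemma bS_zero (n : ℕ) (v : Fin n → ℚ) (hn : 0 < n) : bS n v 0 = v ⟨0, hn⟩ := by
  unfold bS
  rw [Finset.sum_eq_single (⟨0, hn⟩ : Fin n)]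
  · simp
  · intro s _ hs
    rw [if_neg]
    intro h
    exact hs (Fin.ext (show (s : ℕ) = 0 by omega))
  · simp

lemma bS_succ (n : ℕ) (v : Fin n → ℚ) (k : ℕ) (hk : k + 1 < n) :
    bS n v (k + 1) - bS n v k = v ⟨k + 1, hk⟩ := by
  unfold bS
  rw [← Finset.sum_sub_distrib]
  rw [Finset.sum_eq_single (⟨k + 1, hk⟩ : Fin n)]
  · simp
  · intro s _ hs
    have hne : (s : ℕ) ≠ k + 1 := fun h => hs (Fin.ext h)
    by_cases h : (s : ℕ) ≤ k
    · rw [if_pos (by omega), if_pos h, sub_self]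
    · rw [if_neg (by omega), if_neg h, sub_self]
  · simp

lemma bS_simpleRoot (n : ℕ) (i : Fin n) (k : ℕ) (hk : k < n) :
    bS n (simpleRootB n i) k = if (i : ℕ) = k then 1 else 0 := by
  unfold bS
  have hdecomp : ∀ s : Fin n, (if (s : ℕ) ≤ k then simpleRootB n i s else 0)
      = (if s = i ∧ (i : ℕ) ≤ k then (1 : ℚ) else 0)
        + (if (s : ℕ) = (i : ℕ) + 1 ∧ (i : ℕ) + 1 ≤ k then (-1 : ℚ) else 0) := by
    intro s
    unfold simpleRootB
    simp only [Fin.ext_iff]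
    split_ifs <;> first | omega | norm_num | (exfalso; omega)
  rw [Finset.sum_congr rfl fun s _ => hdecomp s, Finset.sum_add_distrib]
  have h1 : (∑ s : Fin n, if s = i ∧ (i : ℕ) ≤ k then (1 : ℚ) else 0)
      = if (i : ℕ) ≤ k then 1 else 0 := by
    by_cases h : (i : ℕ) ≤ k <;> simp [h]
  have h2 : (∑ s : Fin n, if (s : ℕ) = (i : ℕ) + 1 ∧ (i : ℕ) + 1 ≤ k then (-1 : ℚ) else 0)
      = if (i : ℕ) + 1 ≤ k then -1 else 0 := by
    by_cases h : (i : ℕ) + 1 ≤ k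
    · have hlt : (i : ℕ) + 1 < n := by omega
      rw [if_pos h, Finset.sum_eq_single (⟨(i : ℕ) + 1, hlt⟩ : Fin n)]
      · simp [h]
      · intro s _ hs
        rw [if_neg]
        rintro ⟨h', -⟩
        exact hs (Fin.ext h')
      · simp
    · rw [if_neg h]
      apply Finset.sum_eq_zero
      intro s _
      rw [if_neg]
      rintro ⟨-, h'⟩
      exact h h'
  rw [h1, h2]
  split_ifs <;> first | omega | norm_num | (exfalso; omega)

lemma bS_comb (n : ℕ) (c : Fin n → ℕ) (k : ℕ) (hk : k < n) :
    bS n (∑ i : Fin n, (c i : ℚ) • simpleRootB n i) k = c ⟨k, hk⟩ := by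
  unfold bS
  have hstep : ∀ s : Fin n,
      (if (s : ℕ) ≤ k then (∑ i : Fin n, (c i : ℚ) • simpleRootB n i) s else 0)
      = ∑ i : Fin n, (c i : ℚ) * (if (s : ℕ) ≤ k then simpleRootB n i s else 0) := by
    intro s
    rw [Finset.sum_apply]
    by_cases h : (s : ℕ) ≤ k
    · simp [h]
    · simp [h]
  rw [Finset.sum_congr rfl fun s _ => hstep s, Finset.sum_comm]
  have hinner : ∀ i : Fin n,
      (∑ s : Fin n, (c i : ℚ) * (if (s : ℕ) ≤ k then simpleRootB n i s else 0))
      = (c i : ℚ) * (if (i : ℕ) = k then 1 else 0) := by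
    intro i
    rw [← Finset.mul_sum]
    congr 1
    exact bS_simpleRoot n i k hk
  rw [Finset.sum_congr rfl fun i _ => hinner i, Finset.sum_eq_single (⟨k, hk⟩ : Fin n)]
  · simp
  · intro s _ hs
    rw [if_neg (fun h => hs (Fin.ext h)), mul_zero]
  · simp

lemma exists_comb_iff (n : ℕ) (v : Fin n → ℚ) :
    (∃ c : Fin n → ℕ, v = ∑ i : Fin n, (c i : ℚ) • simpleRootB n i)
      ↔ ∀ k, k < n → ∃ m : ℕ, bS n v k = m := by
  constructor
  · rintro ⟨c, rfl⟩ k hk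
    exact ⟨c ⟨k, hk⟩, bS_comb n c k hk⟩
  · intro h
    choose f hf using h
    refine ⟨fun t => f t.val t.isLt, ?_⟩
    set g := ∑ i : Fin n, ((f i.val i.isLt : ℚ)) • simpleRootB n i with hg
    have key : ∀ k (hk : k < n), bS n g k = bS n v k := by
      intro k hk
      rw [bS_comb n _ k hk]
      exact (hf k hk).symm
    funext t
    obtain ⟨tv, ht⟩ := t
    cases tv with
    | zero => rw [← bS_zero n v ht, ← bS_zero n g ht, key 0 ht]
    | succ k => rw [← bS_succ n v k ht, ← bS_succ n g k ht, key (k + 1) ht, key k (by omega)]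

lemma sum_indicator_lt (n m : ℕ) (hm : m ≤ n) :
    ∑ s : Fin n, (if (s : ℕ) < m then (1 : ℚ) else 0) = m := by
  rw [Fin.sum_univ_eq_sum_range (fun i => if i < m then (1 : ℚ) else 0) n]
  have hfil : (Finset.range n).filter (fun i => i < m) = Finset.range m := by
    ext a
    simp only [Finset.mem_filter, Finset.mem_range]
    omega
  rw [Finset.sum_ite, hfil]
  simp

lemma bS_fund (n j k : ℕ) (hj : j ≤ n) (hk : k < n) :
    bS n (fundWeightB n j) k = min (k + 1) j := by
  unfold bS fundWeightB
  have hcong : ∀ s : Fin n, (if (s : ℕ) ≤ k then (if (s : ℕ) < j then (1 : ℚ) else 0) else 0)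
      = if (s : ℕ) < min (k + 1) j then (1 : ℚ) else 0 := by
    intro s
    split_ifs <;> first | rfl | omega
  rw [Finset.sum_congr rfl fun s _ => hcong s]
  exact sum_indicator_lt n _ (by omega)

lemma bS_last (n k : ℕ) (hk : k < n) :
    bS n (lastFundWeightB n) k = (k + 1) / 2 := by
  unfold bS lastFundWeightB
  have hcong : ∀ s : Fin n, (if (s : ℕ) ≤ k then (1 : ℚ) / 2 else 0)
      = (1 / 2) * (if (s : ℕ) < k + 1 then (1 : ℚ) else 0) := by
    intro s
    split_ifs <;> first | omega | norm_num | (exfalso; omega)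
  rw [Finset.sum_congr rfl fun s _ => hcong s]
  rw [← Finset.mul_sum, sum_indicator_lt n (k + 1) (by omega)]
  push_cast
  ring

lemma bS_top (n : ℕ) (v : Fin n → ℚ) : bS n v (n - 1) = ∑ t : Fin n, v t := by
  unfold bS
  refine Finset.sum_congr rfl fun s _ => if_pos ?_
  have := s.isLt
  omega

/-- **Hasse diagram of type `Bₙ`.**
(i) For `1 ≤ j ≤ n - 1` and `μ` dominant integral, `ω j - μ` is a nonnegative integral
combination of the simple roots iff `μ = 0` or `μ = ω i` for some `1 ≤ i ≤ j`.
(ii) For `μ` dominant integral, `ω n - μ` is such a combination iff `μ = ω n`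
(the minuscule weight `ω n` is minimal). -/
theorem hasse_type_B (n : ℕ) (hn : 2 ≤ n) :
    (∀ j : ℕ, 1 ≤ j → j ≤ n - 1 → ∀ μ : Fin n → ℚ, IsDominantB n μ →
      ((∃ c : Fin n → ℕ, fundWeightB n j - μ = ∑ i : Fin n, (c i : ℚ) • simpleRootB n i) ↔
        (μ = 0 ∨ ∃ i : ℕ, 1 ≤ i ∧ i ≤ j ∧ μ = fundWeightB n i))) ∧
    (∀ μ : Fin n → ℚ, IsDominantB n μ →
      ((∃ c : Fin n → ℕ, lastFundWeightB n - μ = ∑ i : Fin n, (c i : ℚ) • simpleRootB n i) ↔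
        μ = lastFundWeightB n)) := by
  classical
  have hn0 : 0 < n := by omega
  constructor
  · -- part (i)
    intro j hj1 hj2 μ hμ
    obtain ⟨hmono, hpos, hint⟩ := hμ
    rw [exists_comb_iff]
    constructor
    · intro h
      obtain ⟨m0, hm0⟩ := h 0 hn0
      rw [bS_sub, bS_zero n _ hn0, bS_zero n _ hn0] at hm0
      rw [show fundWeightB n j ⟨0, hn0⟩ = 1 from by
        unfold fundWeightB; rw [if_pos (show ((⟨0, hn0⟩ : Fin n) : ℕ) < j by show 0 < j; omega)]] at hm0
      -- hm0 : 1 - μ ⟨0, hn0⟩ = ↑m0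
      have hZ : ∀ t, ∃ m : ℤ, μ t = m := by
        rcases hint with h' | h'
        · exact h'
        · exfalso
          obtain ⟨p, hp⟩ := h' ⟨0, hn0⟩
          rw [hp] at hm0
          have hc : ((2 * m0 : ℤ) : ℚ) = ((1 - 2 * p : ℤ) : ℚ) := by push_cast; linarith
          have hc2 : (2 * (m0 : ℤ)) = 1 - 2 * p := by exact_mod_cast hc
          omega
      obtain ⟨p0, hp0⟩ := hZ ⟨0, hn0⟩
      have hp0le : p0 ≤ 1 := by
        have h1 : (0 : ℚ) ≤ m0 := Nat.cast_nonneg m0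
        have h2 : (p0 : ℚ) ≤ 1 := by rw [hp0] at hm0; linarith
        exact_mod_cast h2
      have hp0ge : 0 ≤ p0 := by
        have := hpos ⟨0, hn0⟩
        rw [hp0] at this
        exact_mod_cast this
      by_cases h00 : μ ⟨0, hn0⟩ = 0
      · left
        funext t
        have h1 := hmono ⟨0, hn0⟩ t (by simp [Fin.le_def])
        have h2 := hpos t
        rw [h00] at h1
        simp only [Pi.zero_apply]
        linarith
      · right
        have hp01 : p0 = 1 := by
          have hne : p0 ≠ 0 := by
            intro h'
            exact h00 (by rw [hp0, h']; norm_num)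
          omega
        have hμ0 : μ ⟨0, hn0⟩ = 1 := by rw [hp0, hp01]; norm_num
        have h01 : ∀ t, μ t = 0 ∨ μ t = 1 := by
          intro t
          obtain ⟨p, hp⟩ := hZ t
          have h1 : μ t ≤ 1 := by
            have := hmono ⟨0, hn0⟩ t (by simp [Fin.le_def])
            rw [hμ0] at this
            exact this
          have h2 := hpos t
          rw [hp] at h1 h2
          have hb1 : (0 : ℤ) ≤ p := by exact_mod_cast h2
          have hb2 : p ≤ 1 := by exact_mod_cast h1
          have : p = 0 ∨ p = 1 := by omega
          rcases this with h' | h'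
          · left; rw [hp, h']; norm_num
          · right; rw [hp, h']; norm_num
        have hPn : ∀ t : Fin n, n ≤ (t : ℕ) → μ t = 0 := fun t ht =>
          absurd t.isLt (by omega)
        have hex : ∃ i, ∀ t : Fin n, i ≤ (t : ℕ) → μ t = 0 := ⟨n, hPn⟩
        set i := Nat.find hex with hidef
        have hspec : ∀ t : Fin n, i ≤ (t : ℕ) → μ t = 0 := Nat.find_spec hex
        have hin : i ≤ n := Nat.find_le hPn
        have hi1 : 1 ≤ i := by
          by_contra h'
          have hi0 : i = 0 := by omega
          exact h00 (hspec ⟨0, hn0⟩ (show i ≤ 0 by omega))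
        have hones : ∀ t : Fin n, (t : ℕ) < i → μ t = 1 := by
          intro t ht
          have hmin : ¬ (∀ u : Fin n, i - 1 ≤ (u : ℕ) → μ u = 0) :=
            Nat.find_min hex (by omega)
          push_neg at hmin
          obtain ⟨u, hu1, hu2⟩ := hmin
          have htu : t ≤ u := by rw [Fin.le_def]; omega
          have hle := hmono t u htu
          rcases h01 u with h' | h'
          · exact absurd h' hu2
          · rcases h01 t with h'' | h''
            · exfalso; rw [h', h''] at hle; linarith
            · exact h''
        have hμeq : μ = fundWeightB n i := by
          funext t
          unfold fundWeightB
          by_cases ht : (t : ℕ) < i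
          · rw [if_pos ht]; exact hones t ht
          · rw [if_neg ht]; exact hspec t (by omega)
        have hij : i ≤ j := by
          by_contra hij
          push_neg at hij
          obtain ⟨m, hm⟩ := h (i - 1) (by omega)
          rw [hμeq, bS_sub, bS_fund n j (i - 1) (by omega) (by omega),
            bS_fund n i (i - 1) (by omega) (by omega),
            show i - 1 + 1 = i from by omega, min_self,
            min_eq_right (le_of_lt hij)] at hm
          have h1 : (0 : ℚ) ≤ m := Nat.cast_nonneg m
          have h2 : (i : ℚ) ≤ j := by linarith
          have h3 : i ≤ j := by exact_mod_cast h2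
          omega
        exact ⟨i, hi1, hij, hμeq⟩
    · rintro (rfl | ⟨i, hi1, hij, rfl⟩) k hk
      · refine ⟨min (k + 1) j, ?_⟩
        rw [bS_sub, bS_fund n j k (by omega) hk]
        have hz : bS n (0 : Fin n → ℚ) k = 0 := by
          unfold bS; simp
        rw [hz, sub_zero]
      · refine ⟨min (k + 1) j - min (k + 1) i, ?_⟩
        rw [bS_sub, bS_fund n j k (by omega) hk, bS_fund n i k (by omega) hk]
        have hle : min (k + 1) i ≤ min (k + 1) j := by omega
        rw [Nat.cast_sub hle]
  · -- part (ii)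
    intro μ hμ
    obtain ⟨hmono, hpos, hint⟩ := hμ
    rw [exists_comb_iff]
    constructor
    · intro h
      obtain ⟨m0, hm0⟩ := h 0 hn0
      rw [bS_sub, bS_zero n _ hn0, bS_zero n _ hn0] at hm0
      rw [show lastFundWeightB n ⟨0, hn0⟩ = 1 / 2 from rfl] at hm0
      have hH : ∀ t, ∃ m : ℤ, μ t = m + 1 / 2 := by
        rcases hint with h' | h'
        · exfalso
          obtain ⟨p, hp⟩ := h' ⟨0, hn0⟩
          rw [hp] at hm0
          have hc : ((2 * m0 : ℤ) : ℚ) = ((1 - 2 * p : ℤ) : ℚ) := by push_cast; linarith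
          have hc2 : (2 * (m0 : ℤ)) = 1 - 2 * p := by exact_mod_cast hc
          omega
        · exact h'
      have hhalf : ∀ t, 1 / 2 ≤ μ t := by
        intro t
        obtain ⟨p, hp⟩ := hH t
        have h2 := hpos t
        rw [hp] at h2 ⊢
        have hpge : (0 : ℤ) ≤ p := by
          by_contra hc
          push_neg at hc
          have : p ≤ -1 := by omega
          have : (p : ℚ) ≤ -1 := by exact_mod_cast this
          linarith
        have : (0 : ℚ) ≤ p := by exact_mod_cast hpge
        linarith
      obtain ⟨m, hm⟩ := h (n - 1) (by omega)
      rw [bS_sub, bS_top, bS_top] at hm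
      have hsum : ∑ t : Fin n, lastFundWeightB n t = n / 2 := by
        unfold lastFundWeightB
        rw [Finset.sum_const, Finset.card_univ, Fintype.card_fin, nsmul_eq_mul]
        ring
      have hge : (n : ℚ) / 2 ≤ ∑ t : Fin n, μ t := by
        calc (n : ℚ) / 2 = ∑ _t : Fin n, (1 / 2 : ℚ) := by
              rw [Finset.sum_const, Finset.card_univ, Fintype.card_fin, nsmul_eq_mul]; ring
          _ ≤ _ := Finset.sum_le_sum fun t _ => hhalf t
      have hm0' : (0 : ℚ) ≤ m := Nat.cast_nonneg m
      rw [hsum] at hm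
      have hsum_eq : ∑ t : Fin n, μ t = n / 2 := by linarith
      have hzero : ∀ t ∈ Finset.univ, μ t - 1 / 2 = 0 := by
        apply (Finset.sum_eq_zero_iff_of_nonneg (fun t _ => by linarith [hhalf t])).mp
        rw [Finset.sum_sub_distrib, hsum_eq, Finset.sum_const, Finset.card_univ,
          Fintype.card_fin, nsmul_eq_mul]
        ring
      funext t
      have := hzero t (Finset.mem_univ t)
      unfold lastFundWeightB
      linarith
    · rintro rfl k hk
      refine ⟨0, ?_⟩
      rw [sub_self]
      unfold bS
      simp
end

section
/- Let n ≥ 2. In ℤ^n with standard basis e_1, …, e_n, set α_i = e_i − e_{i+1} for 1 ≤ i ≤ n−1 and α_n = 2e_n; set ω_j = e_1 + ⋯ + e_j for 1 ≤ j ≤ n and ω_0 = 0. Call μ ∈ ℤ^n dominant integral if μ_1 ≥ μ_2 ≥ ⋯ ≥ μ_n ≥ 0. Then for 1 ≤ j ≤ n and μ dominant integral, ω_j − μ is a nonnegative integer combination of α_1, …, α_n if and only if μ = ω_{j−2k} for some integer k with 0 ≤ 2k ≤ j. -/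
/-- The simple roots of type `Cₙ` in the standard realization in `ℤⁿ` (`0`-indexed):
`α i = e i - e (i+1)` for `i < n - 1`, and `α (n-1) = 2 • e (n-1)`. -/
def simpleRootC (n : ℕ) (i : Fin n) : Fin n → ℤ := fun t =>
  if t = i then (if (i : ℕ) = n - 1 then 2 else 1)
  else if (t : ℕ) = (i : ℕ) + 1 then -1 else 0

/-- The fundamental weights of type `Cₙ` in the standard realization in `ℤⁿ`
(`0`-indexed): `ω j = e 0 + ⋯ + e (j-1)` for `1 ≤ j ≤ n`, with the convention `ω 0 = 0`. -/
def fundWeightC (n : ℕ) (j : ℕ) : Fin n → ℤ := fun t => if (t : ℕ) < j then 1 else 0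

lemma simpleRootC_eq (n : ℕ) (i t : Fin n) :
    simpleRootC n i t =
      (if t = i then (if (i : ℕ) = n - 1 then 2 else 1) else 0)
        + (if (t : ℕ) = (i : ℕ) + 1 then -1 else 0) := by
  unfold simpleRootC
  split_ifs with h1 h2 h3 h4 h5 <;> first | rfl | (subst h1; omega) | omega

lemma eval_sum (n : ℕ) (d : Fin n → ℤ) (t : Fin n) :
    ∑ i : Fin n, d i * simpleRootC n i t
      = d t * (if (t : ℕ) = n - 1 then 2 else 1)
        - ∑ i : Fin n, (if (t : ℕ) = (i : ℕ) + 1 then d i else 0) := by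
  simp only [simpleRootC_eq, mul_add, Finset.sum_add_distrib, mul_ite, mul_zero, mul_neg_one]
  rw [Finset.sum_ite_eq Finset.univ t (fun i => if (i : ℕ) = n - 1 then d i * 2 else d i * 1)]
  rw [if_pos (Finset.mem_univ t)]
  rw [sub_eq_add_neg, ← Finset.sum_neg_distrib]
  congr 1
  · exact Finset.sum_congr rfl fun i _ => by split_ifs <;> simp


lemma Bsum_zero (n : ℕ) (d : Fin n → ℤ) (t : Fin n) (h : (t : ℕ) = 0) :
    ∑ i : Fin n, (if (t : ℕ) = (i : ℕ) + 1 then d i else 0) = 0 :=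
  Finset.sum_eq_zero fun i _ => by rw [if_neg (by omega)]

lemma Bsum_succ (n : ℕ) (d : Fin n → ℤ) (t : Fin n) (s : ℕ) (hs : s < n)
    (h : (t : ℕ) = s + 1) :
    ∑ i : Fin n, (if (t : ℕ) = (i : ℕ) + 1 then d i else 0) = d ⟨s, hs⟩ := by
  have : ∀ i : Fin n, ((t : ℕ) = (i : ℕ) + 1) = (i = ⟨s, hs⟩) := by
    intro i
    simp only [eq_iff_iff, Fin.ext_iff]
    omega
  simp only [this]
  rw [Finset.sum_ite_eq' Finset.univ (⟨s, hs⟩ : Fin n) d, if_pos (Finset.mem_univ _)]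

lemma sum_simpleRootC (n : ℕ) (i : Fin n) :
    ∑ t : Fin n, simpleRootC n i t = if (i : ℕ) = n - 1 then 2 else 0 := by
  simp only [simpleRootC_eq, Finset.sum_add_distrib]
  rw [Finset.sum_ite_eq' Finset.univ i (fun _ => if (i : ℕ) = n - 1 then (2:ℤ) else 1),
    if_pos (Finset.mem_univ _)]
  by_cases h : (i : ℕ) + 1 < n
  · have : ∑ t : Fin n, (if (t : ℕ) = (i : ℕ) + 1 then (-1 : ℤ) else 0) = -1 := by
      have he : ∀ t : Fin n, ((t : ℕ) = (i : ℕ) + 1) = (t = ⟨(i : ℕ) + 1, h⟩) := by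
        intro t; simp only [eq_iff_iff, Fin.ext_iff]
      simp only [he]
      rw [Finset.sum_ite_eq' Finset.univ (⟨(i : ℕ) + 1, h⟩ : Fin n) (fun _ => (-1 : ℤ)),
        if_pos (Finset.mem_univ _)]
    rw [this]
    simp only [if_neg (show ¬(i : ℕ) = n - 1 by omega)]
    ring
  · have hi : (i : ℕ) = n - 1 := by have := i.isLt; omega
    rw [Finset.sum_eq_zero (fun t _ => by rw [if_neg (by have := t.isLt; omega)])]
    rw [if_pos hi, if_pos hi]
    ring

lemma sum_range_ite (j N : ℕ) :
    ∑ t ∈ Finset.range N, (if t < j then (1 : ℤ) else 0) = (min j N : ℤ) := by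
  induction N with
  | zero => simp
  | succ N ih =>
    rw [Finset.sum_range_succ, ih]
    split_ifs <;> push_cast <;> omega

lemma sum_fundWeightC (n j : ℕ) (hj : j ≤ n) :
    ∑ t : Fin n, fundWeightC n j t = (j : ℤ) := by
  unfold fundWeightC
  rw [Fin.sum_univ_eq_sum_range (fun t => if t < j then (1:ℤ) else 0), sum_range_ite]
  congr 1
  omega

lemma eq_fundWeight (n : ℕ) (μ : Fin n → ℤ)
    (hmono : ∀ s t : Fin n, s ≤ t → μ t ≤ μ s) (hpos : ∀ t, 0 ≤ μ t)
    (h1 : ∀ t, μ t ≤ 1) (m : ℕ) (hm : ∑ t, μ t = (m : ℤ)) :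
    μ = fundWeightC n m := by
  funext t
  unfold fundWeightC
  split_ifs with ht
  · -- show μ t = 1
    by_contra hne
    have ht0 : μ t = 0 := by have := hpos t; have := h1 t; omega
    have hzero : ∀ x : Fin n, x ∉ Finset.Iio t → μ x = 0 := by
      intro x hx
      simp only [Finset.mem_Iio, not_lt] at hx
      have := hmono t x hx
      have := hpos x
      omega
    have hsub : ∑ x ∈ Finset.Iio t, μ x = ∑ x : Fin n, μ x :=
      Finset.sum_subset (Finset.subset_univ _) (fun x _ hx => hzero x hx)
    have hle : ∑ x ∈ Finset.Iio t, μ x ≤ ∑ x ∈ Finset.Iio t, (1 : ℤ) :=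
      Finset.sum_le_sum fun x _ => h1 x
    rw [Finset.sum_const, Fin.card_Iio] at hle
    rw [hsub, hm] at hle
    simp only [nsmul_eq_mul, mul_one] at hle
    omega
  · -- show μ t = 0
    by_contra hne
    have ht1 : μ t = 1 := by have := hpos t; have := h1 t; omega
    have hone : ∀ x : Fin n, x ∈ Finset.Iic t → (1 : ℤ) ≤ μ x := by
      intro x hx
      simp only [Finset.mem_Iic] at hx
      have := hmono x t hx
      omega
    have hge : ∑ x ∈ Finset.Iic t, (1 : ℤ) ≤ ∑ x ∈ Finset.Iic t, μ x :=
      Finset.sum_le_sum hone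
    have hle : ∑ x ∈ Finset.Iic t, μ x ≤ ∑ x : Fin n, μ x :=
      Finset.sum_le_sum_of_subset_of_nonneg (Finset.subset_univ _)
        (fun x _ _ => hpos x)
    rw [Finset.sum_const, Fin.card_Iic] at hge
    rw [hm] at hle
    simp only [nsmul_eq_mul, mul_one] at hge
    push_cast at hge hle
    omega

def coefC (n j k : ℕ) : Fin n → ℕ := fun t =>
  if (t : ℕ) = n - 1 then k
  else min ((t : ℕ) + 1) j - min ((t : ℕ) + 1) (j - 2 * k)

/-- **Hasse diagram of type `Cₙ`.** For `1 ≤ j ≤ n` and `μ` dominant integral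
(i.e. `μ 0 ≥ μ 1 ≥ ⋯ ≥ μ (n-1) ≥ 0`), the difference `ω j - μ` is a nonnegative integral
combination of the simple roots if and only if `μ = ω (j - 2k)` for some `0 ≤ 2k ≤ j`. -/
theorem hasse_type_C (n : ℕ) (hn : 2 ≤ n) (j : ℕ) (hj1 : 1 ≤ j) (hjn : j ≤ n)
    (μ : Fin n → ℤ) (hmono : ∀ s t : Fin n, s ≤ t → μ t ≤ μ s) (hpos : ∀ t, 0 ≤ μ t) :
    (∃ c : Fin n → ℕ, fundWeightC n j - μ = ∑ i : Fin n, (c i : ℤ) • simpleRootC n i) ↔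
      (∃ k : ℕ, 2 * k ≤ j ∧ μ = fundWeightC n (j - 2 * k)) := by
  have hlast : n - 1 < n := by omega
  constructor
  · rintro ⟨c, hc⟩
    set k := c ⟨n - 1, hlast⟩ with hkdef
    have happ : ∀ t : Fin n, fundWeightC n j t - μ t
        = ∑ i : Fin n, (c i : ℤ) * simpleRootC n i t := by
      intro t
      have := congrFun hc t
      simpa [Finset.sum_apply, smul_eq_mul] using this
    -- total sum identity
    have htot : ∑ t : Fin n, μ t = (j : ℤ) - 2 * k := by
      have e1 : ∑ t : Fin n, (fundWeightC n j t - μ t)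
          = ∑ i : Fin n, (c i : ℤ) * (∑ t : Fin n, simpleRootC n i t) := by
        rw [Finset.sum_congr rfl fun t _ => happ t, Finset.sum_comm]
        exact Finset.sum_congr rfl fun i _ => by rw [Finset.mul_sum]
      have e2 : ∑ i : Fin n, (c i : ℤ) * (∑ t : Fin n, simpleRootC n i t)
          = 2 * (k : ℤ) := by
        rw [Finset.sum_congr rfl fun i _ => by rw [sum_simpleRootC]]
        have he : ∀ i : Fin n, ((i : ℕ) = n - 1) = (i = ⟨n - 1, hlast⟩) := by
          intro i; simp only [eq_iff_iff, Fin.ext_iff]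
        simp only [mul_ite, mul_zero, he]
        rw [Finset.sum_ite_eq' Finset.univ (⟨n - 1, hlast⟩ : Fin n)
          (fun i => (c i : ℤ) * 2), if_pos (Finset.mem_univ _)]
        ring
      rw [Finset.sum_sub_distrib, sum_fundWeightC n j hjn, e2] at e1
      linarith
    -- first coordinate bound
    have h0n : (0 : ℕ) < n := by omega
    have h0 : μ ⟨0, h0n⟩ ≤ 1 := by
      have h := happ ⟨0, h0n⟩
      have hw : fundWeightC n j ⟨0, h0n⟩ = 1 := by
        unfold fundWeightC; rw [if_pos]; simpa using (show 0 < j by omega)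
      have hnn : 0 ≤ ∑ i : Fin n, (c i : ℤ) * simpleRootC n i ⟨0, h0n⟩ := by
        refine Finset.sum_nonneg fun i _ => mul_nonneg (by positivity) ?_
        unfold simpleRootC
        split_ifs with h1 h2 h3 <;> simp_all <;> omega
      rw [hw] at h
      omega
    have h1all : ∀ t, μ t ≤ 1 := by
      intro t
      have hle : (⟨0, h0n⟩ : Fin n) ≤ t := by
        simp [Fin.le_def]
      exact le_trans (hmono ⟨0, h0n⟩ t hle) h0
    have hsnn : 0 ≤ ∑ t : Fin n, μ t := Finset.sum_nonneg fun t _ => hpos t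
    have hk2 : 2 * k ≤ j := by omega
    refine ⟨k, hk2, ?_⟩
    refine eq_fundWeight n μ hmono hpos h1all (j - 2 * k) ?_
    rw [htot]
    push_cast
    omega
  · rintro ⟨k, hk, rfl⟩
    refine ⟨coefC n j k, ?_⟩
    funext t
    rw [Pi.sub_apply, Finset.sum_apply]
    simp only [Pi.smul_apply, smul_eq_mul]
    rw [eval_sum n (fun i => ((coefC n j k i : ℤ))) t]
    by_cases ht0 : (t : ℕ) = 0
    · rw [Bsum_zero n _ t ht0]
      have hc1 : ¬ (t : ℕ) = n - 1 := by omega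
      simp only [coefC, fundWeightC, hc1, if_false, ht0]
      split_ifs <;> omega
    · have hs : (t : ℕ) - 1 < n := by omega
      have hts : (t : ℕ) = ((t : ℕ) - 1) + 1 := by omega
      rw [Bsum_succ n _ t ((t : ℕ) - 1) hs hts]
      have hsne : ¬ (((⟨(t : ℕ) - 1, hs⟩ : Fin n) : ℕ) = n - 1) := by
        simp only [Fin.val_mk]
        have := t.isLt
        omega
      simp only [coefC, fundWeightC, hsne, if_false, Fin.val_mk]
      have := t.isLt
      split_ifs <;> omega
end
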